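/- If a continuous function f : [0,1] → ℝ satisfies, for some n* ∈ ℕ and γ ∈ (0,1/2), the dyadic bound |f((k−1)/2ⁿ) − f(k/2ⁿ)| < 2^{−nγ} for all n ≥ n* and 1 ≤ k ≤ 2ⁿ, then for all s < t in [0,1] with 0 < t − s < 2^{−n*} one has |f(t) − f(s)| ≤ (2/(1 − 2^{−γ})) (t − s)^γ; in particular f is locally Hölder continuous with exponent γ. -/

import Mathlib

open Real Set Filter Finset Topology

noncomputable def dyUp (s : ℝ) (m : ℕ) : ℝ := (⌈s * 2^m⌉₊ : ℝ) / 2^m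
noncomputable def dyDn (t : ℝ) (m : ℕ) : ℝ := (⌊t * 2^m⌋₊ : ℝ) / 2^m

lemma dyUp_ge (s : ℝ) (m : ℕ) : s ≤ dyUp s m := by
  rw [dyUp, le_div_iff₀ (by positivity : (0:ℝ) < 2^m)]
  exact Nat.le_ceil _

lemma dyUp_lt {s : ℝ} (hs0 : 0 ≤ s) (m : ℕ) : dyUp s m < s + ((2:ℝ)^m)⁻¹ := by
  rw [dyUp, div_lt_iff₀ (by positivity : (0:ℝ) < 2^m)]
  have h := Nat.ceil_lt_add_one (mul_nonneg hs0 (by positivity) : (0:ℝ) ≤ s * 2 ^ m)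
  have hp : (0:ℝ) < 2^m := by positivity
  calc (⌈s * 2^m⌉₊ : ℝ) < s * 2^m + 1 := h
    _ = (s + ((2:ℝ)^m)⁻¹) * 2^m := by field_simp

lemma dyUp_nonneg (s : ℝ) (m : ℕ) : 0 ≤ dyUp s m := by rw [dyUp]; positivity

lemma dyUp_le_one {s : ℝ} (hs1 : s ≤ 1) (m : ℕ) : dyUp s m ≤ 1 := by
  rw [dyUp, div_le_one (by positivity : (0:ℝ) < 2^m)]
  have : ⌈s * 2^m⌉₊ ≤ 2^m := by
    apply Nat.ceil_le.mpr
    push_cast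
    nlinarith [(by positivity : (0:ℝ) < 2^m)]
  exact_mod_cast this

lemma dyDn_le {t : ℝ} (ht0 : 0 ≤ t) (m : ℕ) : dyDn t m ≤ t := by
  rw [dyDn, div_le_iff₀ (by positivity : (0:ℝ) < 2^m)]
  exact Nat.floor_le (mul_nonneg ht0 (by positivity))

lemma dyDn_gt (t : ℝ) (m : ℕ) : t - ((2:ℝ)^m)⁻¹ < dyDn t m := by
  rw [dyDn, lt_div_iff₀ (by positivity : (0:ℝ) < 2^m)]
  have h := Nat.lt_floor_add_one (t * 2^m)
  have hp : (0:ℝ) < 2^m := by positivity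
  calc (t - ((2:ℝ)^m)⁻¹) * 2^m = t * 2^m - 1 := by field_simp
    _ < (⌊t * 2^m⌋₊ : ℝ) := by linarith

lemma dyDn_nonneg (t : ℝ) (m : ℕ) : 0 ≤ dyDn t m := by rw [dyDn]; positivity

lemma dyDn_le_one {t : ℝ} (ht0 : 0 ≤ t) (ht1 : t ≤ 1) (m : ℕ) : dyDn t m ≤ 1 :=
  le_trans (dyDn_le ht0 m) ht1

lemma dyDn_nat_le {t : ℝ} (ht0 : 0 ≤ t) (ht1 : t ≤ 1) (m : ℕ) : ⌊t * 2^m⌋₊ ≤ 2^m := by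
  have h1 : (⌊t * 2^m⌋₊ : ℝ) ≤ t * 2^m := Nat.floor_le (mul_nonneg ht0 (by positivity))
  have h2 : t * 2^m ≤ (2:ℝ)^m := by nlinarith [(by positivity : (0:ℝ) < 2^m)]
  have : (⌊t * 2^m⌋₊ : ℝ) ≤ ((2^m : ℕ) : ℝ) := by push_cast; linarith
  exact_mod_cast this

lemma step_up (f : ℝ → ℝ) (γ : ℝ) (nstar : ℕ)
    (hdy : ∀ n ≥ nstar, ∀ k : ℕ, 1 ≤ k → k ≤ 2^n →
      |f (((k:ℝ) - 1) / 2^n) - f ((k:ℝ) / 2^n)| < (2:ℝ) ^ (-(n:ℝ) * γ))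
    {s : ℝ} (hs0 : 0 ≤ s) (hs1 : s ≤ 1) {m : ℕ} (hm : nstar ≤ m + 1) :
    |f (dyUp s (m+1)) - f (dyUp s m)| ≤ (2:ℝ) ^ (-((m:ℝ)+1) * γ) := by
  have hp : (0:ℝ) < 2^m := by positivity
  have hcl : ⌈s * 2^m⌉₊ ≤ 2^m := by
    apply Nat.ceil_le.mpr; push_cast; nlinarith
  have h1 : ⌈s * 2^(m+1)⌉₊ ≤ 2 * ⌈s * 2^m⌉₊ := by
    apply Nat.ceil_le.mpr
    have := Nat.le_ceil (s * 2^m)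
    push_cast
    calc s * 2^(m+1) = (s * 2^m) * 2 := by ring
      _ ≤ (⌈s * 2^m⌉₊ : ℝ) * 2 := by linarith
      _ = 2 * (⌈s * 2^m⌉₊ : ℝ) := by ring
  have h2 : 2 * ⌈s * 2^m⌉₊ ≤ ⌈s * 2^(m+1)⌉₊ + 1 := by
    have ha : (⌈s * 2^m⌉₊ : ℝ) < s * 2^m + 1 := Nat.ceil_lt_add_one (mul_nonneg hs0 (by positivity))
    have hb : s * 2^(m+1) ≤ (⌈s * 2^(m+1)⌉₊ : ℝ) := Nat.le_ceil _
    have hc : ((2 * ⌈s * 2^m⌉₊ : ℕ) : ℝ) < ((⌈s * 2^(m+1)⌉₊ + 2 : ℕ) : ℝ) := by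
      push_cast
      have : s * 2^(m+1) = (s * 2^m) * 2 := by ring
      nlinarith
    have := (Nat.cast_lt (α := ℝ)).mp hc
    omega
  rcases (by omega : 2 * ⌈s * 2^m⌉₊ = ⌈s * 2^(m+1)⌉₊ ∨
      2 * ⌈s * 2^m⌉₊ = ⌈s * 2^(m+1)⌉₊ + 1) with he | he
  · have : dyUp s (m+1) = dyUp s m := by
      rw [dyUp, dyUp, ← he]
      push_cast
      rw [pow_succ]
      field_simp
    rw [this, sub_self, abs_zero]
    positivity
  · have hd := hdy (m+1) hm (2 * ⌈s * 2^m⌉₊) (by omega)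
      (by rw [pow_succ]; omega)
    have e1 : (((2 * ⌈s * 2^m⌉₊ : ℕ) : ℝ) - 1) / 2^(m+1) = dyUp s (m+1) := by
      rw [dyUp]
      congr 1
      have : ((2 * ⌈s * 2^m⌉₊ : ℕ) : ℝ) = (⌈s * 2^(m+1)⌉₊ : ℝ) + 1 := by
        exact_mod_cast congrArg (Nat.cast (R := ℝ)) he
      rw [this]; ring
    have e2 : ((2 * ⌈s * 2^m⌉₊ : ℕ) : ℝ) / 2^(m+1) = dyUp s m := by
      rw [dyUp]
      push_cast
      rw [pow_succ]
      field_simp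
    rw [e1, e2] at hd
    have hcast : (2:ℝ) ^ (-((m+1:ℕ):ℝ) * γ) = (2:ℝ) ^ (-((m:ℝ)+1) * γ) := by
      congr 1; push_cast; ring
    rw [hcast] at hd
    exact hd.le

lemma step_dn (f : ℝ → ℝ) (γ : ℝ) (nstar : ℕ)
    (hdy : ∀ n ≥ nstar, ∀ k : ℕ, 1 ≤ k → k ≤ 2^n →
      |f (((k:ℝ) - 1) / 2^n) - f ((k:ℝ) / 2^n)| < (2:ℝ) ^ (-(n:ℝ) * γ))
    {t : ℝ} (ht0 : 0 ≤ t) (ht1 : t ≤ 1) {m : ℕ} (hm : nstar ≤ m + 1) :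
    |f (dyDn t (m+1)) - f (dyDn t m)| ≤ (2:ℝ) ^ (-((m:ℝ)+1) * γ) := by
  have hp : (0:ℝ) < 2^m := by positivity
  have h1 : 2 * ⌊t * 2^m⌋₊ ≤ ⌊t * 2^(m+1)⌋₊ := by
    apply Nat.le_floor
    have := Nat.floor_le (by positivity : 0 ≤ t * 2^m)
    push_cast
    calc 2 * (⌊t * 2^m⌋₊ : ℝ) ≤ 2 * (t * 2^m) := by linarith
      _ = t * 2^(m+1) := by ring
  have h2 : ⌊t * 2^(m+1)⌋₊ ≤ 2 * ⌊t * 2^m⌋₊ + 1 := by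
    have ha := Nat.lt_floor_add_one (t * 2^m)
    have hb : (⌊t * 2^(m+1)⌋₊ : ℝ) ≤ t * 2^(m+1) := Nat.floor_le (mul_nonneg ht0 (by positivity))
    have hc : ((⌊t * 2^(m+1)⌋₊ : ℕ) : ℝ) < ((2 * ⌊t * 2^m⌋₊ + 2 : ℕ) : ℝ) := by
      push_cast
      have : t * 2^(m+1) = (t * 2^m) * 2 := by ring
      nlinarith
    have := (Nat.cast_lt (α := ℝ)).mp hc
    omega
  rcases (by omega : ⌊t * 2^(m+1)⌋₊ = 2 * ⌊t * 2^m⌋₊ ∨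
      ⌊t * 2^(m+1)⌋₊ = 2 * ⌊t * 2^m⌋₊ + 1) with he | he
  · have : dyDn t (m+1) = dyDn t m := by
      rw [dyDn, dyDn, he]
      push_cast
      rw [pow_succ]
      field_simp
    rw [this, sub_self, abs_zero]
    positivity
  · have hk2 : ⌊t * 2^(m+1)⌋₊ ≤ 2^(m+1) := dyDn_nat_le ht0 ht1 (m+1)
    have hd := hdy (m+1) hm (⌊t * 2^(m+1)⌋₊) (by omega) hk2
    have e1 : (((⌊t * 2^(m+1)⌋₊ : ℕ) : ℝ) - 1) / 2^(m+1) = dyDn t m := by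
      rw [dyDn]
      have hcast : ((⌊t * 2^(m+1)⌋₊ : ℕ) : ℝ) = 2 * (⌊t * 2^m⌋₊ : ℝ) + 1 := by
        exact_mod_cast congrArg (Nat.cast (R := ℝ)) he
      rw [hcast, pow_succ]
      field_simp
      ring
    have e2 : ((⌊t * 2^(m+1)⌋₊ : ℕ) : ℝ) / 2^(m+1) = dyDn t (m+1) := by
      rw [dyDn]
    rw [e1, e2, abs_sub_comm] at hd
    have hcast : (2:ℝ) ^ (-((m+1:ℕ):ℝ) * γ) = (2:ℝ) ^ (-((m:ℝ)+1) * γ) := by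
      congr 1; push_cast; ring
    rw [hcast] at hd
    exact hd.le

theorem stmt_9 (f : ℝ → ℝ) (hf : ContinuousOn f (Set.Icc 0 1))
    (γ : ℝ) (hγ : γ ∈ Set.Ioo (0:ℝ) (1/2)) (nstar : ℕ)
    (hdy : ∀ n ≥ nstar, ∀ k : ℕ, 1 ≤ k → k ≤ 2^n →
      |f (((k:ℝ) - 1) / 2^n) - f ((k:ℝ) / 2^n)| < (2:ℝ) ^ (-(n:ℝ) * γ)) :
    ∀ s t : ℝ, s ∈ Set.Icc (0:ℝ) 1 → t ∈ Set.Icc (0:ℝ) 1 → s < t →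
      t - s < (2:ℝ) ^ (-(nstar:ℝ)) →
      |f t - f s| ≤ (2 / (1 - (2:ℝ) ^ (-γ))) * (t - s) ^ γ := by
  obtain ⟨hγ0, hγ2⟩ := hγ
  intro s t hs ht hst hlt
  obtain ⟨hs0, hs1⟩ := hs
  obtain ⟨ht0, ht1⟩ := ht
  set r : ℝ := (2:ℝ) ^ (-γ) with hrdef
  have hr0 : 0 < r := Real.rpow_pos_of_pos two_pos _
  have hr1 : r < 1 := Real.rpow_lt_one_of_one_lt_of_neg one_lt_two (by linarith)
  have h1r : 0 < 1 - r := by linarith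
  have hts : 0 < t - s := by linarith
  -- choose n with 2^{-(n+1)} ≤ t - s < 2^{-n} and nstar ≤ n
  have hPex : ∃ n : ℕ, (2:ℝ) ^ (-((n:ℝ)+1)) ≤ t - s := by
    obtain ⟨n, hn⟩ := exists_pow_lt_of_lt_one hts (by norm_num : (1:ℝ)/2 < 1)
    refine ⟨n, le_of_lt ?_⟩
    calc (2:ℝ) ^ (-((n:ℝ)+1)) ≤ (2:ℝ) ^ (-(n:ℝ)) := by
          apply Real.rpow_le_rpow_of_exponent_le one_le_two; linarith
      _ = ((1:ℝ)/2)^n := by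
          rw [Real.rpow_neg (by norm_num), Real.rpow_natCast, one_div, inv_pow]
      _ < t - s := hn
  classical
  set n := Nat.find hPex with hndef
  have hn1 : (2:ℝ) ^ (-((n:ℝ)+1)) ≤ t - s := Nat.find_spec hPex
  have hn2 : t - s < (2:ℝ) ^ (-(n:ℝ)) := by
    rcases Nat.eq_zero_or_pos n with h0 | hpos
    · rw [h0]
      simp only [Nat.cast_zero, neg_zero, Real.rpow_zero]
      have h1 : (2:ℝ) ^ (-(nstar:ℝ)) ≤ 1 := by
        apply Real.rpow_le_one_of_one_le_of_nonpos one_le_two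
        simp
      linarith
    · have hmin := Nat.find_min hPex (m := n - 1) (by omega)
      push_neg at hmin
      have hc : ((n - 1 : ℕ):ℝ) + 1 = (n:ℝ) := by
        have h1 : (1:ℕ) ≤ n := hpos
        push_cast [h1]
        ring
      rwa [hc] at hmin
  have hnstar : nstar ≤ n := by
    by_contra h
    push_neg at h
    have h2 : (2:ℝ) ^ (-(nstar:ℝ)) ≤ (2:ℝ) ^ (-((n:ℝ)+1)) := by
      apply Real.rpow_le_rpow_of_exponent_le one_le_two
      have : (n:ℝ) + 1 ≤ (nstar:ℝ) := by exact_mod_cast Nat.succ_le_of_lt h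
      linarith
    linarith
  clear hndef
  clear_value n
  set c : ℝ := (2:ℝ) ^ (-((n:ℝ)+1) * γ) with hcdef
  have hc0 : 0 < c := Real.rpow_pos_of_pos two_pos _
  clear_value r c
  -- geometric term identity
  have hterm : ∀ j : ℕ, (2:ℝ) ^ (-((n:ℝ)+1+(j:ℝ)+1) * γ) = c * r * r ^ j := by
    intro j
    have hrj : r ^ j = (2:ℝ) ^ (-γ * (j:ℝ)) := by
      rw [hrdef, ← Real.rpow_natCast ((2:ℝ) ^ (-γ)) j,
        ← Real.rpow_mul (by norm_num : (0:ℝ) ≤ 2)]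
    rw [hrj, hcdef, hrdef, ← Real.rpow_add two_pos, ← Real.rpow_add two_pos]
    congr 1
    ring
  -- geometric sum bound
  have hgeom : ∀ m : ℕ, ∑ j ∈ Finset.range m, r ^ j ≤ 1 / (1 - r) := by
    intro m
    rw [geom_sum_eq (ne_of_lt hr1)]
    have e : (r ^ m - 1) / (r - 1) = (1 - r ^ m) / (1 - r) := by
      rw [show (1:ℝ) - r ^ m = -(r ^ m - 1) by ring,
        show (1:ℝ) - r = -(r - 1) by ring, neg_div_neg_eq]
    rw [e]
    gcongr
    nlinarith [pow_nonneg hr0.le m]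
  have hsum : ∀ m : ℕ, ∑ j ∈ Finset.range m, (c * r * r ^ j) ≤ c * r / (1 - r) := by
    intro m
    rw [← Finset.mul_sum]
    calc c * r * ∑ j ∈ Finset.range m, r ^ j ≤ c * r * (1 / (1 - r)) := by
          apply mul_le_mul_of_nonneg_left (hgeom m) (by positivity)
      _ = c * r / (1 - r) := by ring
  -- chain for s
  have chain_s : ∀ m : ℕ, |f (dyUp s (n+1+m)) - f (dyUp s (n+1))| ≤
      ∑ j ∈ Finset.range m, (c * r * r ^ j) := by
    intro m
    induction m with
    | zero => simp
    | succ m ih =>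
      have hstep := step_up f γ nstar hdy hs0 hs1 (m := n+1+m) (by omega)
      have heq : n+1+(m+1) = n+1+m+1 := by omega
      rw [heq]
      calc |f (dyUp s (n+1+m+1)) - f (dyUp s (n+1))|
          ≤ |f (dyUp s (n+1+m+1)) - f (dyUp s (n+1+m))| +
            |f (dyUp s (n+1+m)) - f (dyUp s (n+1))| := abs_sub_le _ _ _
        _ ≤ (2:ℝ) ^ (-((n:ℝ)+1+(m:ℝ)+1) * γ) +
            ∑ j ∈ Finset.range m, (c * r * r ^ j) := by
            apply add_le_add _ ih
            convert hstep using 3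
            rfl
            push_cast
            ring
        _ = ∑ j ∈ Finset.range (m+1), (c * r * r ^ j) := by
            rw [Finset.sum_range_succ, hterm m]
            ring
  have chain_t : ∀ m : ℕ, |f (dyDn t (n+1+m)) - f (dyDn t (n+1))| ≤
      ∑ j ∈ Finset.range m, (c * r * r ^ j) := by
    intro m
    induction m with
    | zero => simp
    | succ m ih =>
      have hstep := step_dn f γ nstar hdy ht0 ht1 (m := n+1+m) (by omega)
      have heq : n+1+(m+1) = n+1+m+1 := by omega
      rw [heq]
      calc |f (dyDn t (n+1+m+1)) - f (dyDn t (n+1))|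
          ≤ |f (dyDn t (n+1+m+1)) - f (dyDn t (n+1+m))| +
            |f (dyDn t (n+1+m)) - f (dyDn t (n+1))| := abs_sub_le _ _ _
        _ ≤ (2:ℝ) ^ (-((n:ℝ)+1+(m:ℝ)+1) * γ) +
            ∑ j ∈ Finset.range m, (c * r * r ^ j) := by
            apply add_le_add _ ih
            convert hstep using 3
            rfl
            push_cast
            ring
        _ = ∑ j ∈ Finset.range (m+1), (c * r * r ^ j) := by
            rw [Finset.sum_range_succ, hterm m]
            ring
  -- limits
  have hinvtend : Tendsto (fun m : ℕ => ((2:ℝ)^(n+1+m))⁻¹) atTop (𝓝 0) := by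
    have h := tendsto_pow_atTop_nhds_zero_of_lt_one
      (by norm_num : (0:ℝ) ≤ 2⁻¹) (by norm_num : (2:ℝ)⁻¹ < 1)
    have hat : Tendsto (fun m : ℕ => n+1+m) atTop atTop :=
      tendsto_atTop_mono (fun m => Nat.le_add_left m (n+1)) tendsto_id
    have h2 : Tendsto (fun m : ℕ => ((2:ℝ)⁻¹)^(n+1+m)) atTop (𝓝 0) := h.comp hat
    convert h2 using 2 with m
    rw [inv_pow]
  have htend_s : Tendsto (fun m : ℕ => dyUp s (n+1+m)) atTop (𝓝 s) := by
    apply tendsto_of_tendsto_of_tendsto_of_le_of_le (g := fun _ => s)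
      (h := fun m : ℕ => s + ((2:ℝ)^(n+1+m))⁻¹) tendsto_const_nhds
    · simpa using tendsto_const_nhds.add hinvtend
    · intro m; exact dyUp_ge s _
    · intro m; exact (dyUp_lt hs0 _).le
  have htend_t : Tendsto (fun m : ℕ => dyDn t (n+1+m)) atTop (𝓝 t) := by
    apply tendsto_of_tendsto_of_tendsto_of_le_of_le
      (g := fun m : ℕ => t - ((2:ℝ)^(n+1+m))⁻¹) (h := fun _ => t)
    · simpa using tendsto_const_nhds.sub hinvtend
    · exact tendsto_const_nhds
    · intro m; exact (dyDn_gt t _).le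
    · intro m; exact dyDn_le ht0 _
  have hfs : Tendsto (fun m : ℕ => f (dyUp s (n+1+m))) atTop (𝓝 (f s)) := by
    have hcw : ContinuousWithinAt f (Set.Icc 0 1) s := hf s ⟨hs0, hs1⟩
    apply hcw.tendsto.comp
    rw [tendsto_nhdsWithin_iff]
    exact ⟨htend_s, Eventually.of_forall fun m => ⟨dyUp_nonneg s _, dyUp_le_one hs1 _⟩⟩
  have hft : Tendsto (fun m : ℕ => f (dyDn t (n+1+m))) atTop (𝓝 (f t)) := by
    have hcw : ContinuousWithinAt f (Set.Icc 0 1) t := hf t ⟨ht0, ht1⟩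
    apply hcw.tendsto.comp
    rw [tendsto_nhdsWithin_iff]
    exact ⟨htend_t, Eventually.of_forall fun m => ⟨dyDn_nonneg t _, dyDn_le_one ht0 ht1 _⟩⟩
  have hSs : |f s - f (dyUp s (n+1))| ≤ c * r / (1 - r) := by
    have htd : Tendsto (fun m : ℕ => |f (dyUp s (n+1+m)) - f (dyUp s (n+1))|)
        atTop (𝓝 |f s - f (dyUp s (n+1))|) := (hfs.sub tendsto_const_nhds).abs
    exact le_of_tendsto' htd fun m => le_trans (chain_s m) (hsum m)
  have hSt : |f t - f (dyDn t (n+1))| ≤ c * r / (1 - r) := by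
    have htd : Tendsto (fun m : ℕ => |f (dyDn t (n+1+m)) - f (dyDn t (n+1))|)
        atTop (𝓝 |f t - f (dyDn t (n+1))|) := (hft.sub tendsto_const_nhds).abs
    exact le_of_tendsto' htd fun m => le_trans (chain_t m) (hsum m)
  -- middle term
  have hpow1 : (0:ℝ) < 2^(n+1) := by positivity
  have hmul1 : (2:ℝ) ^ (-((n:ℝ)+1)) * 2^(n+1) = 1 := by
    rw [← Real.rpow_natCast 2 (n+1), ← Real.rpow_add two_pos,
      show -((n:ℝ)+1) + ((n+1:ℕ):ℝ) = 0 by push_cast; ring, Real.rpow_zero]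
  have hmul2 : (2:ℝ) ^ (-(n:ℝ)) * 2^(n+1) = 2 := by
    rw [← Real.rpow_natCast 2 (n+1), ← Real.rpow_add two_pos,
      show -(n:ℝ) + ((n+1:ℕ):ℝ) = 1 by push_cast; ring, Real.rpow_one]
  have h4 : (1:ℝ) ≤ (t - s) * 2^(n+1) := by
    calc (1:ℝ) = (2:ℝ) ^ (-((n:ℝ)+1)) * 2^(n+1) := hmul1.symm
      _ ≤ (t - s) * 2^(n+1) := mul_le_mul_of_nonneg_right hn1 hpow1.le
  have h5 : (t - s) * 2^(n+1) < 2 := by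
    calc (t - s) * 2^(n+1) < (2:ℝ) ^ (-(n:ℝ)) * 2^(n+1) :=
        mul_lt_mul_of_pos_right hn2 hpow1
      _ = 2 := hmul2
  have hab1 : ⌈s * 2^(n+1)⌉₊ ≤ ⌊t * 2^(n+1)⌋₊ := by
    apply Nat.le_floor
    have h1 : (⌈s * 2^(n+1)⌉₊ : ℝ) < s * 2^(n+1) + 1 := Nat.ceil_lt_add_one (mul_nonneg hs0 (by positivity))
    nlinarith [h4]
  have hab2 : ⌊t * 2^(n+1)⌋₊ ≤ ⌈s * 2^(n+1)⌉₊ + 1 := by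
    have h1 : (⌊t * 2^(n+1)⌋₊ : ℝ) ≤ t * 2^(n+1) := Nat.floor_le (mul_nonneg ht0 (by positivity))
    have h2 : s * 2^(n+1) ≤ (⌈s * 2^(n+1)⌉₊ : ℝ) := Nat.le_ceil _
    have h3 : ((⌊t * 2^(n+1)⌋₊ : ℕ) : ℝ) < ((⌈s * 2^(n+1)⌉₊ + 2 : ℕ) : ℝ) := by
      push_cast
      nlinarith [h5]
    have := (Nat.cast_lt (α := ℝ)).mp h3
    omega
  have hmid : |f (dyDn t (n+1)) - f (dyUp s (n+1))| ≤ c := by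
    rcases (by omega : ⌊t * 2^(n+1)⌋₊ = ⌈s * 2^(n+1)⌉₊ ∨
        ⌊t * 2^(n+1)⌋₊ = ⌈s * 2^(n+1)⌉₊ + 1) with he | he
    · have : dyDn t (n+1) = dyUp s (n+1) := by
        rw [dyDn, dyUp, he]
      rw [this, sub_self, abs_zero]
      exact hc0.le
    · have hk2 : ⌊t * 2^(n+1)⌋₊ ≤ 2^(n+1) := dyDn_nat_le ht0 ht1 (n+1)
      have hd := hdy (n+1) (by omega) (⌊t * 2^(n+1)⌋₊) (by omega) hk2
      have e1 : (((⌊t * 2^(n+1)⌋₊ : ℕ) : ℝ) - 1) / 2^(n+1) = dyUp s (n+1) := by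
        rw [dyUp]
        congr 1
        have : ((⌊t * 2^(n+1)⌋₊ : ℕ) : ℝ) = (⌈s * 2^(n+1)⌉₊ : ℝ) + 1 := by
          exact_mod_cast congrArg (Nat.cast (R := ℝ)) he
        rw [this]; ring
      have e2 : ((⌊t * 2^(n+1)⌋₊ : ℕ) : ℝ) / 2^(n+1) = dyDn t (n+1) := by
        rw [dyDn]
      rw [e1, e2, abs_sub_comm] at hd
      have hcast : (2:ℝ) ^ (-((n+1:ℕ):ℝ) * γ) = c := by
        rw [hcdef]; congr 1; push_cast; ring
      rw [hcast] at hd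
      exact hd.le
  -- assemble
  have htotal : |f t - f s| ≤ c + 2 * (c * r / (1 - r)) := by
    calc |f t - f s| ≤ |f t - f (dyDn t (n+1))| + |f (dyDn t (n+1)) - f s| :=
        abs_sub_le _ _ _
      _ ≤ |f t - f (dyDn t (n+1))| +
          (|f (dyDn t (n+1)) - f (dyUp s (n+1))| + |f (dyUp s (n+1)) - f s|) := by
          gcongr
          exact abs_sub_le _ _ _
      _ ≤ c * r / (1 - r) + (c + c * r / (1 - r)) := by
          gcongr
          rw [abs_sub_comm]
          exact hSs
      _ = c + 2 * (c * r / (1 - r)) := by ring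
  have hcle : c ≤ (t - s) ^ γ := by
    rw [hcdef, Real.rpow_mul (by norm_num : (0:ℝ) ≤ 2)]
    exact Real.rpow_le_rpow (Real.rpow_nonneg (by norm_num) _) hn1 hγ0.le
  have hfinal : c + 2 * (c * r / (1 - r)) ≤ 2 / (1 - r) * (t - s) ^ γ := by
    have expand : c + 2 * (c * r / (1 - r)) = c * (1 + r) / (1 - r) := by
      field_simp
      ring
    rw [expand, div_le_iff₀ h1r]
    have e2 : 2 / (1 - r) * (t - s) ^ γ * (1 - r) = 2 * (t - s) ^ γ := by
      field_simp
    rw [e2]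
    calc c * (1 + r) ≤ c * 2 := mul_le_mul_of_nonneg_left (by linarith) hc0.le
      _ ≤ 2 * (t - s) ^ γ := by linarith [hcle]
  exact le_trans htotal hfinal
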